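/- For every γ ∈ ℤ, every representative b ∈ ℚ_p^n of a coset of (ℚ_p/ℤ_p)^n, and every k ∈ {0,…,p−1}^n with k ≠ 0, the function ω_{γbk} is locally constant with compact support, satisfies ∫_{ℚ_p^n} ω_{γbk}(x) dⁿx = 0, and is an eigenfunction of A_β: (A_β ω_{γbk})(x) = A(p^{1−γ}) ω_{γbk}(x) for all x ∈ ℚ_p^n. -/

import Mathlib

open MeasureTheory Filter Topology Metric

noncomputable instance qpnMeasurableSpace {p : ℕ} [Fact p.Prime] {n : ℕ} :
    MeasurableSpace (Fin n → ℚ_[p]) := borel _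

instance qpnBorelSpace {p : ℕ} [Fact p.Prime] {n : ℕ} :
    BorelSpace (Fin n → ℚ_[p]) := ⟨rfl⟩

namespace PadicHeat

variable {p : ℕ} [Fact p.Prime] {n : ℕ}

/-- The pairing `ξ·x = Σ_j ξ_j x_j` on `ℚ_p^n`. -/
noncomputable def dotQ (ξ x : Fin n → ℚ_[p]) : ℚ_[p] := ∑ j, ξ j * x j

/-- The heat kernel `K(x,t) = ∫_{ℚ_p^n∖ℤ_p^n} ψ(−x·ξ) e^{−tA(ξ)} dⁿξ`. -/
noncomputable def heatK (μ : Measure (Fin n → ℚ_[p])) (ψ : ℚ_[p] → ℂ)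
    (A : (Fin n → ℚ_[p]) → ℝ) (t : ℝ) (x : Fin n → ℚ_[p]) : ℂ :=
  ∫ ξ in {ξ : Fin n → ℚ_[p] | 1 < ‖ξ‖}, ψ (-dotQ x ξ) * (Real.exp (-(t * A ξ)) : ℂ) ∂μ

open Classical in
/-- The semigroup `T(t)`: the identity for `t = 0` and convolution with `K(·,t)` for `t ≠ 0`. -/
noncomputable def heatT (μ : Measure (Fin n → ℚ_[p])) (ψ : ℚ_[p] → ℂ)
    (A : (Fin n → ℚ_[p]) → ℝ) (t : ℝ) (f : (Fin n → ℚ_[p]) → ℂ)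
    (x : Fin n → ℚ_[p]) : ℂ :=
  if t = 0 then f x else ∫ y, heatK μ ψ A t y * f (x - y) ∂μ

/-- The `p`-adic Fourier transform `f̂(ξ) = ∫ ψ(ξ·x) f(x) dⁿx`. -/
noncomputable def fourierQ (μ : Measure (Fin n → ℚ_[p])) (ψ : ℚ_[p] → ℂ)
    (f : (Fin n → ℚ_[p]) → ℂ) (ξ : Fin n → ℚ_[p]) : ℂ :=
  ∫ x, ψ (dotQ ξ x) * f x ∂μ

/-- The pseudodifferential operator `A_β`, `(A_β f)(x) = ∫ ψ(−ξ·x) A(ξ) f̂(ξ) dⁿξ`. -/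
noncomputable def opA (μ : Measure (Fin n → ℚ_[p])) (ψ : ℚ_[p] → ℂ)
    (A : (Fin n → ℚ_[p]) → ℝ) (f : (Fin n → ℚ_[p]) → ℂ) (x : Fin n → ℚ_[p]) : ℂ :=
  ∫ ξ, ψ (-dotQ ξ x) * (A ξ : ℂ) * fourierQ μ ψ f ξ ∂μ

/-- Membership in the Lizorkin space `𝓛₀(ℤ_p^n)`: locally constant, supported in the unit
ball, with zero mean. -/
def MemL0 (μ : Measure (Fin n → ℚ_[p])) (f : (Fin n → ℚ_[p]) → ℂ) : Prop :=
  IsLocallyConstant f ∧ (∀ x : Fin n → ℚ_[p], 1 < ‖x‖ → f x = 0) ∧ (∫ x, f x ∂μ) = 0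

/-- Membership in `L²₀(ℤ_p^n)`: square integrable, vanishing (a.e.) outside the unit ball,
with zero mean. -/
def MemL20 (μ : Measure (Fin n → ℚ_[p])) (f : (Fin n → ℚ_[p]) → ℂ) : Prop :=
  MemLp f 2 μ ∧ (∀ᵐ x ∂μ, 1 < ‖x‖ → f x = 0) ∧ (∫ x, f x ∂μ) = 0

/-- The wavelet `ω_{γbk}(x) = p^{−nγ/2} ψ(p^{−1} k·(p^γ x − b)) Ω(‖p^γ x − b‖_p)`. -/
noncomputable def omegaFn (ψ : ℚ_[p] → ℂ) (γ : ℤ) (b : Fin n → ℚ_[p]) (k : Fin n → ℕ)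
    (x : Fin n → ℚ_[p]) : ℂ :=
  ((p : ℝ) ^ (-((n : ℝ) * (γ : ℝ)) / 2) : ℝ) *
    ψ ((p : ℚ_[p])⁻¹ * ∑ j, (k j : ℚ_[p]) * ((p : ℚ_[p]) ^ γ * x j - b j)) *
    (if ‖(fun j => (p : ℚ_[p]) ^ γ * x j - b j : Fin n → ℚ_[p])‖ ≤ 1 then 1 else 0)

end PadicHeat

open PadicHeat

namespace PadicHeat

variable {p : ℕ} [Fact p.Prime] {n : ℕ}

lemma PH.norm_add_le_max (x y : Fin n → ℚ_[p]) : ‖x + y‖ ≤ max ‖x‖ ‖y‖ := by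
  rcases n.eq_zero_or_pos with h | h
  · subst h
    have : x + y = 0 := funext fun i => i.elim0
    rw [this, norm_zero]
    exact le_max_of_le_left (norm_nonneg x)
  refine (pi_norm_le_iff_of_nonneg (le_max_of_le_left (norm_nonneg x))).2 fun i => ?_
  exact (Padic.nonarchimedean (x i) (y i)).trans
    (max_le_max (norm_le_pi_norm x i) (norm_le_pi_norm y i))

lemma PH.norm_add_le_of_le {x y : Fin n → ℚ_[p]} {r : ℝ} (hx : ‖x‖ ≤ r) (hy : ‖y‖ ≤ r) :
    ‖x + y‖ ≤ r := (PH.norm_add_le_max x y).trans (max_le hx hy)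

lemma PH.norm_add_iff_of_le {x t : Fin n → ℚ_[p]} {r : ℝ} (ht : ‖t‖ ≤ r) :
    ‖x + t‖ ≤ r ↔ ‖x‖ ≤ r := by
  constructor
  · intro h
    have : x = (x + t) + (-t) := by abel
    rw [this]
    exact PH.norm_add_le_of_le h (by simpa using ht)
  · intro h; exact PH.norm_add_le_of_le h ht

lemma PH.norm_dot_le (w z : Fin n → ℚ_[p]) : ‖dotQ w z‖ ≤ ‖w‖ * ‖z‖ := by
  refine IsUltrametricDist.norm_sum_le_of_forall_le_of_nonneg
    (mul_nonneg (norm_nonneg _) (norm_nonneg _)) fun i _ => ?_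
  rw [norm_mul]
  exact mul_le_mul (norm_le_pi_norm w i) (norm_le_pi_norm z i) (norm_nonneg _) (norm_nonneg _)

lemma PH.dot_add_right (w x y : Fin n → ℚ_[p]) :
    dotQ w (x + y) = dotQ w x + dotQ w y := by
  simp [dotQ, mul_add, Finset.sum_add_distrib]

lemma PH.dot_add_left (w w' x : Fin n → ℚ_[p]) :
    dotQ (w + w') x = dotQ w x + dotQ w' x := by
  simp [dotQ, add_mul, Finset.sum_add_distrib]

lemma PH.dot_comm (w x : Fin n → ℚ_[p]) : dotQ w x = dotQ x w := by
  simp [dotQ, mul_comm]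

lemma PH.dot_sub_right (w x y : Fin n → ℚ_[p]) :
    dotQ w (x - y) = dotQ w x - dotQ w y := by
  simp [dotQ, mul_sub, Finset.sum_sub_distrib]

lemma PH.dot_neg_right (w x : Fin n → ℚ_[p]) : dotQ w (-x) = -dotQ w x := by
  simp [dotQ]

lemma PH.dot_neg_left (w x : Fin n → ℚ_[p]) : dotQ (-w) x = -dotQ w x := by
  simp [dotQ]

lemma PH.key_integral (μ : Measure (Fin n → ℚ_[p])) [μ.IsAddHaarMeasure]
    (ψ : ℚ_[p] → ℂ)
    (hψadd : ∀ a b : ℚ_[p], ψ (a + b) = ψ a * ψ b)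
    (hψtriv : ∀ a : ℚ_[p], ‖a‖ ≤ 1 → ψ a = 1)
    (hψnontriv : ∃ a : ℚ_[p], ‖a‖ ≤ p ∧ ψ a ≠ 1)
    (w x₀ : Fin n → ℚ_[p]) (γ' : ℤ) :
    (∫ x, ψ (dotQ w x) * (if ‖x - x₀‖ ≤ (p:ℝ)^γ' then 1 else 0) ∂μ)
      = (if ‖w‖ ≤ (p:ℝ)^(-γ') then 1 else 0) * ψ (dotQ w x₀) *
        ((μ (closedBall (0 : Fin n → ℚ_[p]) ((p:ℝ)^γ'))).toReal : ℂ) := by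
  have hp1 : (1:ℝ) < p := by exact_mod_cast (Fact.out : p.Prime).one_lt
  have hp0 : (0:ℝ) < p := lt_trans one_pos hp1
  have hpne : (p:ℝ) ≠ 0 := ne_of_gt hp0
  have hrpos : (0:ℝ) < (p:ℝ)^γ' := zpow_pos hp0 _
  have hrpos' : (0:ℝ) < (p:ℝ)^(-γ') := zpow_pos hp0 _
  by_cases hw : ‖w‖ ≤ (p:ℝ)^(-γ')
  · -- constant-phase case
    have hpt : ∀ x : Fin n → ℚ_[p],
        ψ (dotQ w x) * (if ‖x - x₀‖ ≤ (p:ℝ)^γ' then (1:ℂ) else 0)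
          = ψ (dotQ w x₀) * (if ‖x - x₀‖ ≤ (p:ℝ)^γ' then (1:ℂ) else 0) := by
      intro x
      by_cases hx : ‖x - x₀‖ ≤ (p:ℝ)^γ'
      · have h1 : ‖dotQ w (x - x₀)‖ ≤ 1 := by
          refine (PH.norm_dot_le w (x - x₀)).trans ?_
          calc ‖w‖ * ‖x - x₀‖ ≤ (p:ℝ)^(-γ') * (p:ℝ)^γ' :=
                mul_le_mul hw hx (norm_nonneg _) (le_of_lt hrpos')
            _ = 1 := by rw [← zpow_add₀ hpne]; simp
        have hxx : dotQ w x = dotQ w x₀ + dotQ w (x - x₀) := by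
          rw [← PH.dot_add_right]; congr 1; abel
        rw [hxx, hψadd, hψtriv _ h1, mul_one]
      · simp [if_neg hx]
    rw [integral_congr_ae (Filter.Eventually.of_forall hpt), integral_const_mul]
    have hind : (fun x : Fin n → ℚ_[p] => (if ‖x - x₀‖ ≤ (p:ℝ)^γ' then (1:ℂ) else 0))
        = (closedBall x₀ ((p:ℝ)^γ')).indicator (fun _ => (1:ℂ)) := by
      funext x
      by_cases hx : ‖x - x₀‖ ≤ (p:ℝ)^γ' <;>
        simp [Set.indicator_apply, mem_closedBall_iff_norm, dist_eq_norm, hx]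
    rw [hind, integral_indicator_const _ measurableSet_closedBall]
    have hmeas : μ (closedBall x₀ ((p:ℝ)^γ')) = μ (closedBall (0 : Fin n → ℚ_[p]) ((p:ℝ)^γ')) := by
      have hset : (fun x : Fin n → ℚ_[p] => x + (-x₀)) ⁻¹' closedBall 0 ((p:ℝ)^γ')
          = closedBall x₀ ((p:ℝ)^γ') := by
        ext x
        simp [mem_closedBall_iff_norm, sub_eq_add_neg]
      rw [← hset, measure_preimage_add_right]
    rw [measureReal_def, hmeas, if_pos hw, one_mul]
    simp [mul_comm]
  · -- oscillation case
    obtain ⟨a, ha, hane⟩ := hψnontriv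
    have hex : ∃ j, ¬ ‖w j‖ ≤ (p:ℝ)^(-γ') := by
      by_contra h
      push_neg at h
      exact hw ((pi_norm_le_iff_of_nonneg (le_of_lt hrpos')).2 fun i => h i)
    obtain ⟨j, hj⟩ := hex
    have hwj_lb : (p:ℝ)^(1-γ') ≤ ‖w j‖ := by
      have h2 : ¬ ‖w j‖ < (p:ℝ)^(-γ'+1) :=
        fun hlt => hj ((Padic.norm_le_pow_iff_norm_lt_pow_add_one _ _).2 hlt)
      have := le_of_not_gt h2
      rwa [show -γ'+1 = 1-γ' by ring] at this
    have hwj0 : w j ≠ 0 := by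
      intro h
      apply hj
      rw [h, norm_zero]
      exact le_of_lt hrpos'
    set s : ℚ_[p] := a / w j with hs
    set t : Fin n → ℚ_[p] := Pi.single j s with htdef
    have htn : ‖t‖ ≤ (p:ℝ)^γ' := by
      refine (pi_norm_le_iff_of_nonneg (le_of_lt hrpos)).2 fun i => ?_
      rcases eq_or_ne i j with h | hij
      case inl =>
        subst h
        rw [htdef, Pi.single_eq_same, hs, norm_div, div_le_iff₀ (norm_pos_iff.2 hwj0)]
        calc ‖a‖ ≤ (p:ℝ) := ha
          _ = (p:ℝ)^γ' * (p:ℝ)^(1-γ') := by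
              rw [← zpow_add₀ hpne]; norm_num
          _ ≤ (p:ℝ)^γ' * ‖w i‖ := mul_le_mul_of_nonneg_left hwj_lb (le_of_lt hrpos)
      case inr =>
        rw [htdef, Pi.single_eq_of_ne hij, norm_zero]
        exact le_of_lt hrpos
    have hdot_t : dotQ w t = a := by
      have : dotQ w t = w j * s := by
        simp only [dotQ, htdef, Pi.single_apply, mul_ite, mul_zero]
        rw [Finset.sum_ite_eq' Finset.univ j (fun i => w i * s)]
        simp
      rw [this, hs, mul_comm, div_mul_cancel₀ _ hwj0]
    have key : ∀ x : Fin n → ℚ_[p],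
        ψ (dotQ w (x + t)) * (if ‖x + t - x₀‖ ≤ (p:ℝ)^γ' then (1:ℂ) else 0)
          = ψ a * (ψ (dotQ w x) * (if ‖x - x₀‖ ≤ (p:ℝ)^γ' then (1:ℂ) else 0)) := by
      intro x
      have h1 : x + t - x₀ = (x - x₀) + t := by abel
      have h2 : (‖x + t - x₀‖ ≤ (p:ℝ)^γ') ↔ (‖x - x₀‖ ≤ (p:ℝ)^γ') := by
        rw [h1]; exact PH.norm_add_iff_of_le htn
      rw [PH.dot_add_right, hψadd, hdot_t]
      by_cases hx : ‖x - x₀‖ ≤ (p:ℝ)^γ'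
      · rw [if_pos (h2.2 hx), if_pos hx]; ring
      · rw [if_neg (fun hc => hx (h2.1 hc)), if_neg hx]; ring
    set I := ∫ x, ψ (dotQ w x) * (if ‖x - x₀‖ ≤ (p:ℝ)^γ' then (1:ℂ) else 0) ∂μ with hI
    have hinv := integral_add_right_eq_self
      (μ := μ) (fun x => ψ (dotQ w x) * (if ‖x - x₀‖ ≤ (p:ℝ)^γ' then (1:ℂ) else 0)) t
    have hIa : I = ψ a * I := by
      conv_lhs => rw [hI, ← hinv]
      rw [integral_congr_ae (Filter.Eventually.of_forall key), integral_const_mul, ← hI]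
    have hI0 : I = 0 := by
      have h3 : (ψ a - 1) * I = 0 := by
        rw [sub_mul, one_mul, ← hIa]
        ring
      rcases mul_eq_zero.1 h3 with h | h
      · exact absurd (sub_eq_zero.1 h) hane
      · exact h
    rw [hI0, if_neg hw]
    ring

lemma PH.ball_measure_mul (μ : Measure (Fin n → ℚ_[p])) [μ.IsAddHaarMeasure]
    (hμ : μ (closedBall (0 : Fin n → ℚ_[p]) 1) = 1) (γ : ℤ) :
    (μ (closedBall (0 : Fin n → ℚ_[p]) ((p:ℝ)^γ))).toReal *
      (μ (closedBall (0 : Fin n → ℚ_[p]) ((p:ℝ)^(-γ)))).toReal = 1 := by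
  have hp1 : (1:ℝ) < p := by exact_mod_cast (Fact.out : p.Prime).one_lt
  have hp0 : (0:ℝ) < p := lt_trans one_pos hp1
  have hpq : (p:ℚ_[p]) ≠ 0 := by
    exact_mod_cast Nat.cast_ne_zero.2 (Fact.out : p.Prime).ne_zero
  set c : ℚ_[p] := (p:ℚ_[p])^γ with hc
  have hc0 : c ≠ 0 := zpow_ne_zero _ hpq
  have hcnorm : ‖c‖ = (p:ℝ)^(-γ) := Padic.norm_p_zpow γ
  let e : (Fin n → ℚ_[p]) ≃+ (Fin n → ℚ_[p]) :=
    { toFun := fun x => c • x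
      invFun := fun x => c⁻¹ • x
      left_inv := fun x => by simp [smul_smul, inv_mul_cancel₀ hc0]
      right_inv := fun x => by simp [smul_smul, mul_inv_cancel₀ hc0]
      map_add' := fun x y => smul_add c x y }
  have hec : Continuous e := continuous_const_smul c
  have hec' : Continuous e.symm := continuous_const_smul c⁻¹
  set ν : Measure (Fin n → ℚ_[p]) := μ.map e with hν
  haveI : ν.IsAddHaarMeasure := AddEquiv.isAddHaarMeasure_map μ e hec hec'
  have huniq := Measure.isAddLeftInvariant_eq_smul ν μ
  set k := Measure.addHaarScalarFactor ν μ with hk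
  have hmap : ∀ r : ℝ, ν (closedBall 0 r) = μ (e ⁻¹' closedBall 0 r) :=
    fun r => Measure.map_apply hec.measurable measurableSet_closedBall
  have hpre : ∀ r : ℝ, e ⁻¹' closedBall (0 : Fin n → ℚ_[p]) r
      = closedBall (0 : Fin n → ℚ_[p]) ((p:ℝ)^γ * r) := by
    intro r
    ext x
    have : e x = c • x := rfl
    simp only [Set.mem_preimage, mem_closedBall_iff_norm, sub_zero, this, norm_smul, hcnorm]
    rw [show (p:ℝ)^(-γ) * ‖x‖ ≤ r ↔ ‖x‖ ≤ (p:ℝ)^γ * r by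
      rw [zpow_neg, inv_mul_le_iff₀ (zpow_pos hp0 γ)]]
  have h1 : μ (closedBall (0 : Fin n → ℚ_[p]) ((p:ℝ)^γ)) = (k : ENNReal) := by
    have := hmap 1
    rw [hpre 1, mul_one] at this
    rw [← this, huniq, Measure.smul_apply, hμ, ENNReal.smul_def, smul_eq_mul, mul_one]
  have h2 : (k : ENNReal) * μ (closedBall (0 : Fin n → ℚ_[p]) ((p:ℝ)^(-γ))) = 1 := by
    have := hmap ((p:ℝ)^(-γ))
    rw [hpre _, show (p:ℝ)^γ * (p:ℝ)^(-γ) = 1 by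
      rw [← zpow_add₀ (ne_of_gt hp0)]; simp] at this
    rw [hμ] at this
    rw [← this, huniq, Measure.smul_apply, ENNReal.smul_def, smul_eq_mul]
  have hEN : μ (closedBall (0 : Fin n → ℚ_[p]) ((p:ℝ)^γ)) *
      μ (closedBall (0 : Fin n → ℚ_[p]) ((p:ℝ)^(-γ))) = 1 := by
    rw [h1, h2]
  rw [← ENNReal.toReal_mul, hEN, ENNReal.toReal_one]

end PadicHeat


/-- For every `γ ∈ ℤ`, `b ∈ ℚ_p^n` and `k ∈ {0,…,p−1}^n`, `k ≠ 0`, the wavelet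
`ω_{γbk}` is locally constant with compact support, has zero integral, and is an eigenfunction
of `A_β` with eigenvalue `A(p^{1−γ})`. -/
theorem omega_is_eigenfunction {p n : ℕ} [Fact p.Prime] (hn : 0 < n)
    (μ : Measure (Fin n → ℚ_[p])) [μ.IsAddHaarMeasure]
    (hμ : μ (closedBall (0 : Fin n → ℚ_[p]) 1) = 1)
    (β C₀ C₁ : ℝ) (hβ : 0 < β) (hC₀ : 0 < C₀) (hC₁ : 0 < C₁)
    (A : (Fin n → ℚ_[p]) → ℝ) (g : ℝ → ℝ)
    (hrad : ∀ ξ : Fin n → ℚ_[p], A ξ = g ‖ξ‖)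
    (hlow : ∀ ξ : Fin n → ℚ_[p], C₀ * ‖ξ‖ ^ β ≤ A ξ)
    (hupp : ∀ ξ : Fin n → ℚ_[p], A ξ ≤ C₁ * ‖ξ‖ ^ β)
    (ψ : ℚ_[p] → ℂ) (hψcont : Continuous ψ)
    (hψadd : ∀ a b : ℚ_[p], ψ (a + b) = ψ a * ψ b)
    (hψnorm : ∀ a : ℚ_[p], ‖ψ a‖ = 1)
    (hψtriv : ∀ a : ℚ_[p], ‖a‖ ≤ 1 → ψ a = 1)
    (hψnontriv : ∃ a : ℚ_[p], ‖a‖ ≤ p ∧ ψ a ≠ 1)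
    (γ : ℤ) (b : Fin n → ℚ_[p]) (k : Fin n → ℕ)
    (hk : ∀ i, k i < p) (hk0 : k ≠ 0) :
    IsLocallyConstant (omegaFn ψ γ b k) ∧
    HasCompactSupport (omegaFn ψ γ b k) ∧
    (∫ x, omegaFn ψ γ b k x ∂μ) = 0 ∧
    ∀ x : Fin n → ℚ_[p],
      opA μ ψ A (omegaFn ψ γ b k) x = (g ((p : ℝ) ^ (1 - γ)) : ℂ) * omegaFn ψ γ b k x := by
  classical
  have hp1 : (1:ℝ) < p := by exact_mod_cast (Fact.out : p.Prime).one_lt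
  have hp0 : (0:ℝ) < p := lt_trans one_pos hp1
  have hpne : (p:ℝ) ≠ 0 := ne_of_gt hp0
  have hpq : (p:ℚ_[p]) ≠ 0 := by
    exact_mod_cast Nat.cast_ne_zero.2 (Fact.out : p.Prime).ne_zero
  have hψ0 : ψ 0 = 1 := hψtriv 0 (by simp)
  set kv : Fin n → ℚ_[p] := fun j => ((k j : ℚ_[p])) with hkv
  set u : Fin n → ℚ_[p] := (p:ℚ_[p])^(γ-1) • kv with hu
  set x₀ : Fin n → ℚ_[p] := (p:ℚ_[p])^(-γ) • b with hx₀
  set c₀ : ℝ := (p : ℝ) ^ (-((n : ℝ) * (γ : ℝ)) / 2) with hc₀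
  set C : ℚ_[p] := -((p : ℚ_[p])⁻¹ * ∑ j, kv j * b j) with hC
  -- norm of kv
  have hkv_le : ∀ i, ‖kv i‖ ≤ 1 := by
    intro i
    have : ((k i : ℤ) : ℚ_[p]) = kv i := by push_cast [hkv]; ring
    rw [← this]
    exact Padic.norm_int_le_one _
  have hkv1 : ‖kv‖ = 1 := by
    obtain ⟨i, hi⟩ := Function.ne_iff.1 hk0
    have hki : k i ≠ 0 := hi
    have hnd : ¬ ((p:ℤ) ∣ (k i : ℤ)) := by
      intro hdvd
      have hdvd' : p ∣ k i := by exact_mod_cast hdvd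
      have h5 := Nat.le_of_dvd (Nat.pos_of_ne_zero hki) hdvd'
      have h6 := hk i
      omega
    have h1 : ¬ ‖((k i : ℤ) : ℚ_[p])‖ < 1 := fun hlt =>
      hnd (Padic.norm_intCast_lt_one_iff.1 hlt)
    have hcast : ((k i : ℤ) : ℚ_[p]) = kv i := by push_cast [hkv]; ring
    rw [hcast] at h1
    have hikv : ‖kv i‖ = 1 := le_antisymm (hkv_le i) (le_of_not_gt h1)
    refine le_antisymm ((pi_norm_le_iff_of_nonneg zero_le_one).2 hkv_le) ?_
    calc (1:ℝ) = ‖kv i‖ := hikv.symm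
      _ ≤ ‖kv‖ := norm_le_pi_norm kv i
  have hu_norm : ‖u‖ = (p:ℝ)^(1-γ) := by
    rw [hu, norm_smul, Padic.norm_p_zpow, hkv1, mul_one, neg_sub]
  -- p-power arithmetic
  have hpp1 : (p:ℚ_[p])^γ * (p:ℚ_[p])^(-γ) = 1 := by
    rw [← zpow_add₀ hpq]; simp
  have hpp2 : (p:ℚ_[p])⁻¹ * (p:ℚ_[p])^γ = (p:ℚ_[p])^(γ-1) := by
    rw [zpow_sub₀ hpq, zpow_one]; ring
  have hpp3 : (p:ℚ_[p])^(γ-1) * (p:ℚ_[p])^(-γ) = (p:ℚ_[p])⁻¹ := by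
    rw [← zpow_add₀ hpq, show γ-1 + -γ = -1 by ring, zpow_neg_one]
  -- normal form of the wavelet
  have hω : ∀ x : Fin n → ℚ_[p], omegaFn ψ γ b k x
      = (c₀ : ℂ) * (ψ (C + dotQ u x) *
          (if ‖x - x₀‖ ≤ (p:ℝ)^γ then (1:ℂ) else 0)) := by
    intro x
    have hphase : (p : ℚ_[p])⁻¹ * ∑ j, (k j : ℚ_[p]) * ((p : ℚ_[p]) ^ γ * x j - b j)
        = C + dotQ u x := by
      have hterm : ∀ j : Fin n, (p : ℚ_[p])⁻¹ * ((k j : ℚ_[p]) * ((p : ℚ_[p]) ^ γ * x j - b j))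
          = (p:ℚ_[p])^(γ-1) * kv j * x j - (p : ℚ_[p])⁻¹ * (kv j * b j) := by
        intro j
        rw [hkv, ← hpp2]
        ring
      calc (p : ℚ_[p])⁻¹ * ∑ j, (k j : ℚ_[p]) * ((p : ℚ_[p]) ^ γ * x j - b j)
          = ∑ j, (p : ℚ_[p])⁻¹ * ((k j : ℚ_[p]) * ((p : ℚ_[p]) ^ γ * x j - b j)) := by
            rw [Finset.mul_sum]
        _ = ∑ j, ((p:ℚ_[p])^(γ-1) * kv j * x j - (p : ℚ_[p])⁻¹ * (kv j * b j)) :=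
            Finset.sum_congr rfl fun j _ => hterm j
        _ = (∑ j, (p:ℚ_[p])^(γ-1) * kv j * x j) - ∑ j, (p : ℚ_[p])⁻¹ * (kv j * b j) := by
            rw [Finset.sum_sub_distrib]
        _ = C + dotQ u x := by
            rw [hC, dotQ, ← Finset.mul_sum]
            have : ∀ j : Fin n, u j * x j = (p:ℚ_[p])^(γ-1) * kv j * x j := by
              intro j
              rw [hu]
              simp [mul_assoc]
            rw [Finset.sum_congr rfl fun j _ => this j]
            ring
    have hvec : (fun j => (p : ℚ_[p]) ^ γ * x j - b j) = (p:ℚ_[p])^γ • (x - x₀) := by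
      funext j
      rw [hx₀]
      simp only [Pi.smul_apply, Pi.sub_apply, smul_eq_mul]
      rw [mul_sub, ← mul_assoc, hpp1]
      ring
    have hcond : (‖(fun j => (p : ℚ_[p]) ^ γ * x j - b j : Fin n → ℚ_[p])‖ ≤ 1)
        ↔ (‖x - x₀‖ ≤ (p:ℝ)^γ) := by
      rw [hvec, norm_smul, Padic.norm_p_zpow, zpow_neg,
        inv_mul_le_iff₀ (zpow_pos hp0 γ), mul_one]
    simp only [omegaFn, hphase, hcond]
    rw [hc₀]
    ring
  -- further norm facts
  have hu_gt : ¬ ‖u‖ ≤ (p:ℝ)^(-γ) := by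
    rw [hu_norm]
    exact not_le.2 (zpow_lt_zpow_right₀ hp1 (by omega))
  constructor
  · -- locally constant
    rw [IsLocallyConstant.iff_exists_open]
    intro x
    refine ⟨ball x ((p:ℝ)^(γ-1)), isOpen_ball, mem_ball_self (zpow_pos hp0 _), ?_⟩
    intro y hy
    have hd : ‖y - x‖ ≤ (p:ℝ)^(γ-1) := le_of_lt (by rwa [mem_ball_iff_norm] at hy)
    rw [hω y, hω x]
    have hphase : ψ (C + dotQ u y) = ψ (C + dotQ u x) := by
      have h1 : C + dotQ u y = (C + dotQ u x) + dotQ u (y - x) := by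
        rw [PH.dot_sub_right]; ring
      have h2 : ‖dotQ u (y - x)‖ ≤ 1 := by
        refine (PH.norm_dot_le u (y - x)).trans ?_
        calc ‖u‖ * ‖y - x‖ ≤ (p:ℝ)^(1-γ) * (p:ℝ)^(γ-1) := by
              refine mul_le_mul (le_of_eq hu_norm) hd (norm_nonneg _) (zpow_nonneg (le_of_lt hp0) _)
          _ = 1 := by rw [← zpow_add₀ hpne]; norm_num
      rw [h1, hψadd, hψtriv _ h2, mul_one]
    have hcond : (‖y - x₀‖ ≤ (p:ℝ)^γ) ↔ (‖x - x₀‖ ≤ (p:ℝ)^γ) := by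
      have h1 : y - x₀ = (x - x₀) + (y - x) := by abel
      rw [h1]
      exact PH.norm_add_iff_of_le (hd.trans (zpow_le_zpow_right₀ (le_of_lt hp1) (by omega)))
    rw [hphase]
    simp only [hcond]
  refine ⟨?_, ?_, ?_⟩
  · -- compact support
    refine HasCompactSupport.intro (isCompact_closedBall x₀ ((p:ℝ)^γ)) ?_
    intro x hx
    rw [hω x, if_neg (by rwa [mem_closedBall_iff_norm] at hx)]
    ring
  · -- zero integral
    have hstep : ∀ x : Fin n → ℚ_[p], omegaFn ψ γ b k x
        = ((c₀:ℂ) * ψ C) * (ψ (dotQ u x) * (if ‖x - x₀‖ ≤ (p:ℝ)^γ then (1:ℂ) else 0)) := by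
      intro x
      rw [hω x, hψadd]
      ring
    rw [integral_congr_ae (Filter.Eventually.of_forall hstep), integral_const_mul,
      PH.key_integral μ ψ hψadd hψtriv hψnontriv u x₀ γ, if_neg hu_gt]
    ring
  · -- eigenfunction property
    intro x
    set Mγ : ℝ := (μ (closedBall (0 : Fin n → ℚ_[p]) ((p:ℝ)^γ))).toReal with hMγ
    set Mγ' : ℝ := (μ (closedBall (0 : Fin n → ℚ_[p]) ((p:ℝ)^(-γ)))).toReal with hMγ'
    set F : (Fin n → ℚ_[p]) → ℂ := fourierQ μ ψ (omegaFn ψ γ b k) with hFdef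
    have hF : ∀ ξ : Fin n → ℚ_[p], F ξ
        = ((c₀:ℂ) * ψ C) * ((if ‖ξ + u‖ ≤ (p:ℝ)^(-γ) then (1:ℂ) else 0) *
            ψ (dotQ (ξ + u) x₀) * (Mγ : ℂ)) := by
      intro ξ
      have hstep : ∀ y : Fin n → ℚ_[p], ψ (dotQ ξ y) * omegaFn ψ γ b k y
          = ((c₀:ℂ) * ψ C) * (ψ (dotQ (ξ + u) y) *
              (if ‖y - x₀‖ ≤ (p:ℝ)^γ then (1:ℂ) else 0)) := by
        intro y
        rw [hω y, hψadd C (dotQ u y), PH.dot_add_left, hψadd (dotQ ξ y) (dotQ u y)]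
        ring
      rw [hFdef]
      show (∫ y, ψ (dotQ ξ y) * omegaFn ψ γ b k y ∂μ) = _
      rw [integral_congr_ae (Filter.Eventually.of_forall hstep), integral_const_mul,
        PH.key_integral μ ψ hψadd hψtriv hψnontriv (ξ + u) x₀ γ]
    have heig : ∀ ξ : Fin n → ℚ_[p],
        (A ξ : ℂ) * F ξ = ((g ((p : ℝ) ^ (1 - γ)) : ℝ) : ℂ) * F ξ := by
      intro ξ
      by_cases h : ‖ξ + u‖ ≤ (p:ℝ)^(-γ)
      · have hle : (p:ℝ)^(-γ) < (p:ℝ)^(1-γ) := zpow_lt_zpow_right₀ hp1 (by omega)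
        have hξnorm : ‖ξ‖ = (p:ℝ)^(1-γ) := by
          have hup : ‖ξ‖ ≤ (p:ℝ)^(1-γ) := by
            have h1 : ξ = (ξ + u) + (-u) := by abel
            rw [h1]
            refine PH.norm_add_le_of_le (h.trans (le_of_lt hle)) ?_
            rw [norm_neg, hu_norm]
          have hlow2 : (p:ℝ)^(1-γ) ≤ ‖ξ‖ := by
            by_contra hcon
            push_neg at hcon
            have h1 : u = (ξ + u) + (-ξ) := by abel
            have h2 := PH.norm_add_le_max (ξ + u) (-ξ)
            rw [← h1] at h2
            rw [norm_neg, hu_norm] at h2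
            have : max ‖ξ + u‖ ‖ξ‖ < (p:ℝ)^(1-γ) := max_lt (lt_of_le_of_lt h hle) hcon
            exact absurd h2 (not_le.2 this)
          exact le_antisymm hup hlow2
        rw [hrad ξ, hξnorm]
      · have hF0 : F ξ = 0 := by
          rw [hF ξ, if_neg h]
          ring
        rw [hF0]
        ring
    -- compute opA
    have hstep1 : ∀ ξ : Fin n → ℚ_[p],
        ψ (-dotQ ξ x) * (A ξ : ℂ) * F ξ
          = ((g ((p : ℝ) ^ (1 - γ)) : ℝ) : ℂ) * (ψ (-dotQ ξ x) * F ξ) := by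
      intro ξ
      rw [mul_assoc, heig ξ]
      ring
    have hstep2 : ∀ ξ : Fin n → ℚ_[p],
        ψ (-dotQ ξ x) * F ξ
          = ((c₀:ℂ) * ψ C * (Mγ : ℂ) * ψ (dotQ u x₀)) *
              (ψ (dotQ (x₀ - x) ξ) * (if ‖ξ - (-u)‖ ≤ (p:ℝ)^(-γ) then (1:ℂ) else 0)) := by
      intro ξ
      rw [hF ξ, sub_neg_eq_add]
      have e1 : ψ (dotQ (ξ + u) x₀) = ψ (dotQ ξ x₀) * ψ (dotQ u x₀) := by
        rw [PH.dot_add_left, hψadd]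
      have e2 : ψ (dotQ (x₀ - x) ξ) = ψ (-dotQ ξ x) * ψ (dotQ ξ x₀) := by
        rw [← hψadd, PH.dot_comm]
        congr 1
        rw [PH.dot_sub_right]
        ring
      rw [e1, e2]
      ring
    have hCu : dotQ u x₀ = -C := by
      rw [hC, dotQ, neg_neg, Finset.mul_sum]
      refine Finset.sum_congr rfl fun j _ => ?_
      rw [hu, hx₀]
      simp only [Pi.smul_apply, smul_eq_mul]
      calc (p:ℚ_[p])^(γ-1) * kv j * ((p:ℚ_[p])^(-γ) * b j)
          = ((p:ℚ_[p])^(γ-1) * (p:ℚ_[p])^(-γ)) * (kv j * b j) := by ring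
        _ = (p:ℚ_[p])⁻¹ * (kv j * b j) := by rw [hpp3]
    have f1 : ψ C * ψ (dotQ u x₀) = 1 := by
      rw [hCu, ← hψadd, add_neg_cancel, hψ0]
    have f4 : (Mγ : ℂ) * (Mγ' : ℂ) = 1 := by
      have := PH.ball_measure_mul μ hμ γ
      rw [← hMγ, ← hMγ'] at this
      exact_mod_cast congrArg (fun r : ℝ => (r : ℂ)) this
    calc opA μ ψ A (omegaFn ψ γ b k) x
        = ∫ ξ, ψ (-dotQ ξ x) * (A ξ : ℂ) * F ξ ∂μ := rfl
      _ = ((g ((p : ℝ) ^ (1 - γ)) : ℝ) : ℂ) * ∫ ξ, ψ (-dotQ ξ x) * F ξ ∂μ := by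
          rw [integral_congr_ae (Filter.Eventually.of_forall hstep1), integral_const_mul]
      _ = ((g ((p : ℝ) ^ (1 - γ)) : ℝ) : ℂ) * (((c₀:ℂ) * ψ C * (Mγ : ℂ) * ψ (dotQ u x₀)) *
            ((if ‖x₀ - x‖ ≤ (p:ℝ)^(-(-γ)) then (1:ℂ) else 0) * ψ (dotQ (x₀ - x) (-u)) * (Mγ' : ℂ))) := by
          rw [integral_congr_ae (Filter.Eventually.of_forall hstep2), integral_const_mul,
            PH.key_integral μ ψ hψadd hψtriv hψnontriv (x₀ - x) (-u) (-γ), ← hMγ']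
      _ = ((g ((p : ℝ) ^ (1 - γ)) : ℝ) : ℂ) * omegaFn ψ γ b k x := by
          rw [hω x, neg_neg]
          have e3 : ψ (dotQ (x₀ - x) (-u)) = ψ (C + dotQ u x) := by
            congr 1
            rw [PH.dot_comm, PH.dot_neg_left, PH.dot_sub_right, hCu]
            ring
          have e4 : (‖x₀ - x‖ ≤ (p:ℝ)^γ) ↔ (‖x - x₀‖ ≤ (p:ℝ)^γ) := by
            rw [norm_sub_rev]
          rw [e3]
          simp only [e4]
          by_cases hxc : ‖x - x₀‖ ≤ (p:ℝ)^γ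
          · rw [if_pos hxc]
            calc ((g ((p : ℝ) ^ (1 - γ)) : ℝ) : ℂ) * (((c₀:ℂ) * ψ C * (Mγ : ℂ) * ψ (dotQ u x₀)) *
                  (1 * ψ (C + dotQ u x) * (Mγ' : ℂ)))
                = ((g ((p : ℝ) ^ (1 - γ)) : ℝ) : ℂ) * ((c₀:ℂ) * (ψ C * ψ (dotQ u x₀)) *
                    ((Mγ : ℂ) * (Mγ' : ℂ)) * ψ (C + dotQ u x)) := by ring
              _ = _ := by rw [f1, f4]; ring
          · rw [if_neg hxc]
            ring
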